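/- Let I ⊆ ℝ be an open interval, k ≥ 1, and let N : I → Mat_{k×k}(ℝ) be a differentiable family of symmetric matrices such that the operator norm of N′(t) − Id is at most ε for every t ∈ I, where 0 < ε < 1/k. Then the set {t ∈ I : det N(t) = 0} contains at most k elements. -/

import Mathlib

open Matrix Set

/-- Quadratic form bound coming from the operator norm on Euclidean space. -/
lemma stmt8_aux_quad_bound {k : ℕ} (A : Matrix (Fin k) (Fin k) ℝ) {ε : ℝ}
    (h : ‖Matrix.toEuclideanCLM (n := Fin k) (𝕜 := ℝ) A‖ ≤ ε) (u : Fin k → ℝ) :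
    |u ⬝ᵥ A *ᵥ u| ≤ ε * (u ⬝ᵥ u) := by
  set T := Matrix.toEuclideanCLM (n := Fin k) (𝕜 := ℝ) A with hT
  set x : EuclideanSpace ℝ (Fin k) := (WithLp.equiv 2 (Fin k → ℝ)).symm u with hx
  have h1 : inner ℝ (T x) x = (A *ᵥ u) ⬝ᵥ u := by
    simp [hT, hx, Matrix.toEuclideanCLM_toLp, PiLp.inner_apply,
      RCLike.inner_apply, dotProduct, Matrix.toLin'_apply, mul_comm]
  have h2 : @inner ℝ _ _ x x = u ⬝ᵥ u := by
    simp [hx, -real_inner_self_eq_norm_sq, PiLp.inner_apply, RCLike.inner_apply, dotProduct,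
      EuclideanSpace.norm_sq_eq]
    simp [sq]
  have h3 : u ⬝ᵥ A *ᵥ u = @inner ℝ _ _ (T x) x := by
    rw [h1, dotProduct_comm]
  rw [h3]
  calc |@inner ℝ _ _ (T x) x| ≤ ‖T x‖ * ‖x‖ := abs_real_inner_le_norm _ _
    _ ≤ (‖T‖ * ‖x‖) * ‖x‖ := by
        apply mul_le_mul_of_nonneg_right (T.le_opNorm x) (norm_nonneg x)
    _ ≤ (ε * ‖x‖) * ‖x‖ := by
        apply mul_le_mul_of_nonneg_right
          (mul_le_mul_of_nonneg_right h (norm_nonneg x)) (norm_nonneg x)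
    _ = ε * (u ⬝ᵥ u) := by
        rw [← h2, real_inner_self_eq_norm_sq]; ring

/-- Mean value estimate for the quadratic forms of the family. -/
lemma stmt8_aux_slope {k : ℕ} {a b : ℝ} {N N' : ℝ → Matrix (Fin k) (Fin k) ℝ} {ε : ℝ}
    (hderiv : ∀ t ∈ Set.Ioo a b, ∀ i j : Fin k,
      HasDerivAt (fun s => N s i j) (N' t i j) t)
    (hnorm : ∀ t ∈ Set.Ioo a b,
      ‖Matrix.toEuclideanCLM (n := Fin k) (𝕜 := ℝ) (N' t - 1)‖ ≤ ε)
    {s t : ℝ} (hs : s ∈ Set.Ioo a b) (ht : t ∈ Set.Ioo a b) (hst : s < t)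
    (u : Fin k → ℝ) :
    |u ⬝ᵥ (N t - N s) *ᵥ u - (t - s) * (u ⬝ᵥ u)| ≤ ε * (t - s) * (u ⬝ᵥ u) := by
  have hIcc : Set.Icc s t ⊆ Set.Ioo a b := fun τ hτ =>
    ⟨lt_of_lt_of_le hs.1 hτ.1, lt_of_le_of_lt hτ.2 ht.2⟩
  have hIoo : Set.Ioo s t ⊆ Set.Ioo a b := fun τ hτ => hIcc ⟨le_of_lt hτ.1, le_of_lt hτ.2⟩
  set f : ℝ → ℝ := fun τ => u ⬝ᵥ (N τ) *ᵥ u with hf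
  have hrw : ∀ (M : Matrix (Fin k) (Fin k) ℝ),
      u ⬝ᵥ M *ᵥ u = ∑ i, ∑ j, u i * (M i j * u j) := by
    intro M; simp [dotProduct, Matrix.mulVec, Finset.mul_sum]
  have hfd : ∀ τ ∈ Set.Ioo a b, HasDerivAt f (u ⬝ᵥ (N' τ) *ᵥ u) τ := by
    intro τ hτ
    rw [hrw]
    have hfr : f = fun τ' => ∑ i, ∑ j, u i * (N τ' i j * u j) := by
      funext τ'; simp only [hf]; rw [hrw]
    rw [hfr]
    apply HasDerivAt.fun_sum; intro i _
    apply HasDerivAt.fun_sum; intro j _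
    exact ((hderiv τ hτ i j).mul_const (u j)).const_mul (u i)
  have hfc : ContinuousOn f (Set.Icc s t) := fun τ hτ =>
    ((hfd τ (hIcc hτ)).continuousAt).continuousWithinAt
  obtain ⟨c, hc, hceq⟩ := exists_hasDerivAt_eq_slope f (fun τ => u ⬝ᵥ (N' τ) *ᵥ u) hst hfc
    (fun τ hτ => hfd τ (hIoo hτ))
  have hsplit : u ⬝ᵥ (N' c) *ᵥ u = u ⬝ᵥ u + u ⬝ᵥ (N' c - 1) *ᵥ u := by
    rw [Matrix.sub_mulVec, Matrix.one_mulVec, dotProduct_sub]; ring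
  have hfts : f t - f s = u ⬝ᵥ (N t - N s) *ᵥ u := by
    simp [hf, Matrix.sub_mulVec, dotProduct_sub]
  have htpos : 0 < t - s := sub_pos.2 hst
  rw [hsplit] at hceq
  have key : u ⬝ᵥ (N t - N s) *ᵥ u - (t - s) * (u ⬝ᵥ u)
      = (t - s) * (u ⬝ᵥ (N' c - 1) *ᵥ u) := by
    rw [← hfts]
    have h2 : f t - f s = (t - s) * (u ⬝ᵥ u + u ⬝ᵥ (N' c - 1) *ᵥ u) := by
      rw [hceq]; field_simp
    rw [h2]; ring
  have hq := stmt8_aux_quad_bound (N' c - 1) (hnorm c (hIoo hc)) u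
  rw [key, abs_mul, abs_of_pos htpos]
  calc (t - s) * |u ⬝ᵥ (N' c - 1) *ᵥ u| ≤ (t - s) * (ε * (u ⬝ᵥ u)) :=
        mul_le_mul_of_nonneg_left hq (le_of_lt htpos)
    _ = ε * (t - s) * (u ⬝ᵥ u) := by ring

/-- Kernel vectors at distinct zeros of the determinant are nearly orthogonal. -/
lemma stmt8_aux_pair {k : ℕ} {a b : ℝ} {N N' : ℝ → Matrix (Fin k) (Fin k) ℝ} {ε : ℝ}
    (hsymm : ∀ t ∈ Set.Ioo a b, (N t).IsSymm)
    (hderiv : ∀ t ∈ Set.Ioo a b, ∀ i j : Fin k,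
      HasDerivAt (fun s => N s i j) (N' t i j) t)
    (hnorm : ∀ t ∈ Set.Ioo a b,
      ‖Matrix.toEuclideanCLM (n := Fin k) (𝕜 := ℝ) (N' t - 1)‖ ≤ ε)
    {s t : ℝ} (hs : s ∈ Set.Ioo a b) (ht : t ∈ Set.Ioo a b) (hst : s < t)
    {v w : Fin k → ℝ} (hv : N s *ᵥ v = 0) (hw : N t *ᵥ w = 0)
    (hv1 : v ⬝ᵥ v = 1) (hw1 : w ⬝ᵥ w = 1) :
    |v ⬝ᵥ w| ≤ ε := by
  set D := N t - N s with hD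
  have hDsymm : Dᵀ = D := by
    rw [hD, Matrix.transpose_sub, hsymm t ht, hsymm s hs]
  have symdot : ∀ x y : Fin k → ℝ, x ⬝ᵥ D *ᵥ y = y ⬝ᵥ D *ᵥ x := by
    intro x y
    rw [Matrix.dotProduct_mulVec, ← Matrix.mulVec_transpose, hDsymm, dotProduct_comm]
  have hvDw : v ⬝ᵥ D *ᵥ w = 0 := by
    have h1 : D *ᵥ w = -(N s *ᵥ w) := by
      rw [hD, Matrix.sub_mulVec, hw, zero_sub]
    rw [h1, dotProduct_neg, Matrix.dotProduct_mulVec, ← Matrix.mulVec_transpose,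
      hsymm s hs, hv, zero_dotProduct, neg_zero]
  set c := v ⬝ᵥ w with hc
  have hwv : w ⬝ᵥ v = c := dotProduct_comm w v
  have hPM : (v + w) ⬝ᵥ D *ᵥ (v + w) = (v - w) ⬝ᵥ D *ᵥ (v - w) := by
    simp only [Matrix.mulVec_add, Matrix.mulVec_sub, dotProduct_add,
      dotProduct_sub, add_dotProduct, sub_dotProduct]
    rw [symdot w v] at *
    rw [hvDw]
    ring
  have hnp : (v + w) ⬝ᵥ (v + w) = 2 + 2 * c := by
    simp only [dotProduct_add, add_dotProduct]
    rw [hv1, hw1, hwv, hc]; ring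
  have hnm : (v - w) ⬝ᵥ (v - w) = 2 - 2 * c := by
    simp only [dotProduct_sub, sub_dotProduct]
    rw [hv1, hw1, hwv, hc]; ring
  have h1 := stmt8_aux_slope hderiv hnorm hs ht hst (v + w)
  have h2 := stmt8_aux_slope hderiv hnorm hs ht hst (v - w)
  rw [hnp] at h1
  rw [hnm] at h2
  have htpos : 0 < t - s := sub_pos.2 hst
  have hcomb : |(4 * (t - s)) * c| ≤ (4 * (t - s)) * ε := by
    have e1 : ((v + w) ⬝ᵥ D *ᵥ (v + w) - (t - s) * (2 + 2 * c))
        - ((v - w) ⬝ᵥ D *ᵥ (v - w) - (t - s) * (2 - 2 * c)) = -((4 * (t - s)) * c) := by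
      rw [hPM]; ring
    have e2 := abs_sub ((v + w) ⬝ᵥ D *ᵥ (v + w) - (t - s) * (2 + 2 * c))
      ((v - w) ⬝ᵥ D *ᵥ (v - w) - (t - s) * (2 - 2 * c))
    rw [e1, abs_neg] at e2
    calc |(4 * (t - s)) * c| ≤ ε * (t - s) * (2 + 2 * c) + ε * (t - s) * (2 - 2 * c) :=
          e2.trans (add_le_add h1 h2)
      _ = (4 * (t - s)) * ε := by ring
  rw [abs_mul, abs_of_pos (by linarith : (0:ℝ) < 4 * (t - s))] at hcomb
  exact le_of_mul_le_mul_left hcomb (by linarith)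

/-- Gram-matrix estimate: a vanishing almost-orthonormal Gram combination is impossible. -/
lemma stmt8_aux_gram {k : ℕ} {ε : ℝ} (hε0 : 0 ≤ ε) (hεk1 : ε * k < 1)
    (x : Fin (k+1) → ℝ) (g : Fin (k+1) → Fin (k+1) → ℝ)
    (hgd : ∀ i, g i i = 1) (hgo : ∀ i j, i ≠ j → |g i j| ≤ ε)
    (i0 : Fin (k+1)) (hx0 : x i0 ≠ 0)
    (hS : ∑ i, ∑ j, x i * x j * g i j = 0) : False := by
  set B := ∑ i, x i ^ 2 with hB
  have hBpos : 0 < B := by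
    have h1 : x i0 ^ 2 ≤ B :=
      Finset.single_le_sum (fun i _ => sq_nonneg (x i)) (Finset.mem_univ i0)
    have := pow_pos (abs_pos.2 hx0) 2
    rw [← sq_abs (x i0)] at h1
    linarith
  set T := ∑ i, ∑ j ∈ Finset.univ.erase i, x i * x j * g i j with hT
  have hsplit : ∑ i, ∑ j, x i * x j * g i j = B + T := by
    rw [hB, hT, ← Finset.sum_add_distrib]
    refine Finset.sum_congr rfl fun i _ => ?_
    rw [← Finset.add_sum_erase _ _ (Finset.mem_univ i), hgd i]
    ring
  set A := ∑ i, |x i| with hA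
  have hTbound : |T| ≤ ε * (A ^ 2 - B) := by
    have h1 : |T| ≤ ∑ i, ∑ j ∈ Finset.univ.erase i, |x i| * |x j| * ε := by
      refine (Finset.abs_sum_le_sum_abs _ _).trans (Finset.sum_le_sum fun i _ => ?_)
      refine (Finset.abs_sum_le_sum_abs _ _).trans (Finset.sum_le_sum fun j hj => ?_)
      rw [abs_mul, abs_mul]
      exact mul_le_mul_of_nonneg_left (hgo i j (Finset.ne_of_mem_erase hj).symm)
        (by positivity)
    have h2 : ∑ i, ∑ j ∈ Finset.univ.erase i, |x i| * |x j| * ε = ε * (A ^ 2 - B) := by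
      have h3 : ∀ i : Fin (k+1), ∑ j ∈ Finset.univ.erase i, |x i| * |x j| * ε
          = ε * (|x i| * (A - |x i|)) := by
        intro i
        have hfac : ∑ j ∈ Finset.univ.erase i, |x i| * |x j| * ε
            = (ε * |x i|) * ∑ j ∈ Finset.univ.erase i, |x j| := by
          rw [Finset.mul_sum]
          exact Finset.sum_congr rfl fun j _ => by ring
        rw [hfac, Finset.sum_erase_eq_sub (Finset.mem_univ i), ← hA]
        ring
      simp only [h3]
      rw [← Finset.mul_sum, hA, hB]
      have : ∑ i, |x i| * ((∑ j, |x j|) - |x i|)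
          = (∑ i, |x i|) * (∑ j, |x j|) - ∑ i, |x i| ^ 2 := by
        have hterm : ∀ i : Fin (k+1), |x i| * ((∑ j, |x j|) - |x i|)
            = |x i| * (∑ j, |x j|) - |x i| ^ 2 := fun i => by ring
        simp only [hterm]
        rw [Finset.sum_sub_distrib, ← Finset.sum_mul]
      rw [this]
      have hsq : ∑ i, |x i| ^ 2 = ∑ i, x i ^ 2 :=
        Finset.sum_congr rfl fun i _ => sq_abs (x i)
      rw [hsq]; ring
    rw [← h2]; exact h1
  have hA2 : A ^ 2 ≤ (k + 1 : ℝ) * B := by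
    have := sq_sum_le_card_mul_sum_sq (s := (Finset.univ : Finset (Fin (k+1))))
      (f := fun i => |x i|)
    simp only [Finset.card_univ, Fintype.card_fin] at this
    calc A ^ 2 ≤ (((k+1 : ℕ) : ℝ)) * ∑ i, |x i| ^ 2 := by exact_mod_cast this
      _ = (k + 1 : ℝ) * B := by
          rw [hB]; push_cast
          congr 1
          exact Finset.sum_congr rfl fun i _ => sq_abs (x i)
  have hpos : (0:ℝ) < B + T := by
    have hTlow : -(ε * (A ^ 2 - B)) ≤ T := neg_le_of_abs_le hTbound
    have hstep : ε * (A ^ 2 - B) ≤ ε * k * B := by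
      have : A ^ 2 - B ≤ k * B := by nlinarith
      nlinarith
    nlinarith
  rw [hsplit] at hS
  linarith

/-- Let `I = (a,b)` be an open interval and
`N : I → Mat_{k×k}(ℝ)` a differentiable family of symmetric matrices whose
derivative `N'` satisfies `‖N'(t) − Id‖ ≤ ε` in the operator norm for all
`t ∈ I`, where `0 < ε < 1/k`.  Then `{t ∈ I : det N(t) = 0}` has at most `k`
elements. -/
theorem stmt_8 (k : ℕ) (hk : 1 ≤ k) (a b : ℝ)
    (N N' : ℝ → Matrix (Fin k) (Fin k) ℝ) (ε : ℝ)
    (hε0 : 0 < ε) (hεk : ε < 1 / (k : ℝ))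
    (hsymm : ∀ t ∈ Set.Ioo a b, (N t).IsSymm)
    (hderiv : ∀ t ∈ Set.Ioo a b, ∀ i j : Fin k,
      HasDerivAt (fun s => N s i j) (N' t i j) t)
    (hnorm : ∀ t ∈ Set.Ioo a b,
      ‖Matrix.toEuclideanCLM (n := Fin k) (𝕜 := ℝ) (N' t - 1)‖ ≤ ε) :
    ∃ s : Finset ℝ, s.card ≤ k ∧
      ∀ t ∈ Set.Ioo a b, (N t).det = 0 → t ∈ s := by
  classical
  have hk0 : (0:ℝ) < k := by exact_mod_cast Nat.pos_of_ne_zero (by omega)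
  have hεk1 : ε * k < 1 := by rw [lt_div_iff₀ hk0] at hεk; exact hεk
  -- no (k+1) distinct zeros
  have key : ∀ g : Fin (k+1) → ℝ, Function.Injective g →
      (∀ i, g i ∈ Set.Ioo a b) → (∀ i, (N (g i)).det = 0) → False := by
    intro g hginj hgI hgd
    have hv : ∀ i : Fin (k+1), ∃ v : Fin k → ℝ, N (g i) *ᵥ v = 0 ∧ v ⬝ᵥ v = 1 := by
      intro i
      obtain ⟨v, hv0, hvker⟩ := Matrix.exists_mulVec_eq_zero_iff.2 (hgd i)
      have hVsum : v ⬝ᵥ v = ∑ j, v j ^ 2 := by simp [dotProduct, sq]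
      have hV : 0 < v ⬝ᵥ v := by
        rw [hVsum]
        obtain ⟨j0, hj0⟩ := Function.ne_iff.1 hv0
        exact Finset.sum_pos' (fun j _ => sq_nonneg (v j))
          ⟨j0, Finset.mem_univ j0, sq_pos_of_ne_zero hj0⟩
      refine ⟨(Real.sqrt (v ⬝ᵥ v))⁻¹ • v, ?_, ?_⟩
      · rw [Matrix.mulVec_smul, hvker, smul_zero]
      · rw [smul_dotProduct, dotProduct_smul, smul_eq_mul, smul_eq_mul,
          ← mul_assoc, ← mul_inv, Real.mul_self_sqrt hV.le, inv_mul_cancel₀ hV.ne']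
    choose v hvker hvunit using hv
    have hpair : ∀ i j : Fin (k+1), i ≠ j → |v i ⬝ᵥ v j| ≤ ε := by
      intro i j hij
      have hgij : g i ≠ g j := fun h => hij (hginj h)
      rcases lt_or_gt_of_ne hgij with h | h
      · exact stmt8_aux_pair hsymm hderiv hnorm (hgI i) (hgI j) h
          (hvker i) (hvker j) (hvunit i) (hvunit j)
      · rw [dotProduct_comm]
        exact stmt8_aux_pair hsymm hderiv hnorm (hgI j) (hgI i) h
          (hvker j) (hvker i) (hvunit j) (hvunit i)
    have hnli : ¬ LinearIndependent ℝ v := by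
      intro hli
      have h1 := hli.fintype_card_le_finrank
      rw [Module.finrank_fin_fun, Fintype.card_fin] at h1
      omega
    obtain ⟨x, hxsum, i0, hxi0⟩ := Fintype.not_linearIndependent_iff.1 hnli
    have hexp : (∑ i, x i • v i) ⬝ᵥ (∑ j, x j • v j)
        = ∑ i, ∑ j, x i * x j * (v i ⬝ᵥ v j) := by
      simp only [dotProduct, Finset.sum_apply, Pi.smul_apply, smul_eq_mul,
        Finset.sum_mul_sum, Finset.mul_sum]
      rw [Finset.sum_comm]
      refine Finset.sum_congr rfl fun i _ => ?_
      rw [Finset.sum_comm]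
      refine Finset.sum_congr rfl fun j _ => ?_
      rw [Finset.sum_mul]
      exact Finset.sum_congr rfl fun l _ => by ring
    have hS : ∑ i, ∑ j, x i * x j * (v i ⬝ᵥ v j) = 0 := by
      rw [← hexp, hxsum]
      simp
    exact stmt8_aux_gram hε0.le hεk1 x (fun i j => v i ⬝ᵥ v j) hvunit hpair i0 hxi0 hS
  set Z := {t | t ∈ Set.Ioo a b ∧ (N t).det = 0} with hZ
  have hfinset : ∀ s : Finset ℝ, ↑s ⊆ Z → s.card ≠ k+1 := by
    intro s hsub hcard
    have e : s ≃ Fin (k+1) := (s.equivFin).trans (finCongr hcard)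
    refine key (fun i => (e.symm i : ℝ)) ?_ ?_ ?_
    · intro i j hij
      exact e.symm.injective (Subtype.ext hij)
    · intro i; exact (hsub (e.symm i).2).1
    · intro i; exact (hsub (e.symm i).2).2
  have hfin : Z.Finite := by
    by_contra hinf
    obtain ⟨s, hsub, hcard⟩ := Set.Infinite.exists_subset_card_eq hinf (k+1)
    exact hfinset s hsub hcard
  refine ⟨hfin.toFinset, ?_, ?_⟩
  · by_contra hgt
    push_neg at hgt
    obtain ⟨t, htsub, htcard⟩ := Finset.exists_subset_card_eq
      (show k+1 ≤ hfin.toFinset.card by omega)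
    exact hfinset t (fun y hy => hfin.mem_toFinset.1 (htsub hy)) htcard
  · intro t ht hdet
    exact hfin.mem_toFinset.2 ⟨ht, hdet⟩
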